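/- If f : [0,∞) → [0,∞) is s-convex in the second sense (f(tx+(1-t)y) ≤ t^s f(x) + (1-t)^s f(y)) for s ∈ (0,1], then for 0 ≤ a < b: 2^{s-1} f((a+b)/2) ≤ (1/(b-a)) ∫_a^b f(x) dx ≤ (f(a)+f(b))/(s+1). -/

import Mathlib

open MeasureTheory

theorem s_convex_hadamard (s : ℝ) (f : ℝ → ℝ) (a b : ℝ)
    (hs : s ∈ Set.Ioc (0:ℝ) 1)
    (hf : ∀ x ∈ Set.Ici (0:ℝ), 0 ≤ f x)
    (hconv : ∀ x ∈ Set.Ici (0:ℝ), ∀ y ∈ Set.Ici (0:ℝ), ∀ t ∈ Set.Icc (0:ℝ) 1,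
      f (t * x + (1 - t) * y) ≤ t ^ s * f x + (1 - t) ^ s * f y)
    (ha : 0 ≤ a) (hab : a < b)
    (hfint : IntegrableOn f (Set.Icc a b)) :
    (2:ℝ) ^ (s - 1) * f ((a + b) / 2) ≤ (1 / (b - a)) * ∫ x in a..b, f x ∧
    (1 / (b - a)) * ∫ x in a..b, f x ≤ (f a + f b) / (s + 1) := by
  obtain ⟨hs0, hs1⟩ := hs
  have hba : (0:ℝ) < b - a := by linarith
  have hb0 : (0:ℝ) ≤ b := le_trans ha hab.le
  have hI : IntervalIntegrable f volume a b :=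
    (intervalIntegrable_iff_integrableOn_Ioc_of_le hab.le).mpr
      (hfint.mono_set Set.Ioc_subset_Icc_self)
  -- integrability of the two reparametrizations
  have hg1 : IntervalIntegrable (fun t => f ((b - a) * t + a)) volume 0 1 := by
    have := (hI.comp_add_right a).comp_mul_left (c := b - a)
    simpa [sub_self, zero_div, div_self hba.ne'] using this
  have hg2 : IntervalIntegrable (fun t => f ((a - b) * t + b)) volume 0 1 := by
    have := ((hI.comp_add_right b).comp_mul_left (c := a - b)).symm
    have hab' : a - b ≠ 0 := by linarith
    simpa [sub_self, zero_div, div_self hab'] using this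
  -- substitution identities
  have hint1 : ∫ t in (0:ℝ)..1, f ((b - a) * t + a) = (b - a)⁻¹ * ∫ x in a..b, f x := by
    rw [intervalIntegral.integral_comp_mul_add f hba.ne' a]
    norm_num
  have hint2 : ∫ t in (0:ℝ)..1, f ((a - b) * t + b) = (b - a)⁻¹ * ∫ x in a..b, f x := by
    have hab' : a - b ≠ 0 := by linarith
    rw [intervalIntegral.integral_comp_mul_add f hab' b]
    rw [show (a-b) * 0 + b = b by ring, show (a-b) * 1 + b = a by ring,
      intervalIntegral.integral_symm a b]
    field_simp
    rw [smul_eq_mul, show b - a = -(a - b) by ring]; field_simp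
  have h2s : (0:ℝ) < 2 ^ s := Real.rpow_pos_of_pos two_pos _
  constructor
  · -- left inequality
    have hmid : ∀ t ∈ Set.Icc (0:ℝ) 1,
        f ((a + b) / 2) ≤ (1/2:ℝ) ^ s * f ((b - a) * t + a) + (1/2:ℝ) ^ s * f ((a - b) * t + b) := by
      intro t ht
      obtain ⟨ht0, ht1⟩ := ht
      have hx : (b - a) * t + a ∈ Set.Ici (0:ℝ) := by
        simp only [Set.mem_Ici]; nlinarith
      have hy : (a - b) * t + b ∈ Set.Ici (0:ℝ) := by
        simp only [Set.mem_Ici]; nlinarith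
      have := hconv _ hx _ hy (1/2) (by norm_num)
      have heq : (1/2:ℝ) * ((b - a) * t + a) + (1 - 1/2) * ((a - b) * t + b) = (a + b) / 2 := by ring
      rw [heq] at this
      convert this using 3 <;> norm_num
    have hmono := intervalIntegral.integral_mono_on (by norm_num : (0:ℝ) ≤ 1)
      (intervalIntegrable_const (c := f ((a + b) / 2)))
      ((hg1.const_mul _).add (hg2.const_mul _)) hmid
    rw [intervalIntegral.integral_const, intervalIntegral.integral_add (hg1.const_mul _) (hg2.const_mul _),
      intervalIntegral.integral_const_mul, intervalIntegral.integral_const_mul, hint1, hint2] at hmono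
    simp only [smul_eq_mul, sub_zero, one_mul] at hmono
    have hhalf : (1/2:ℝ) ^ s = (2 ^ s)⁻¹ := by
      rw [one_div, Real.inv_rpow (by norm_num)]
    have h2s1 : (2:ℝ) ^ (s - 1) = 2 ^ s / 2 := by
      rw [Real.rpow_sub two_pos, Real.rpow_one]
    rw [hhalf] at hmono
    rw [h2s1, one_div]
    set I := (b - a)⁻¹ * ∫ x in a..b, f x with hIdef
    have : f ((a + b) / 2) ≤ (2 ^ s)⁻¹ * (2 * I) := by nlinarith
    calc 2 ^ s / 2 * f ((a + b) / 2) ≤ 2 ^ s / 2 * ((2 ^ s)⁻¹ * (2 * I)) := by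
          apply mul_le_mul_of_nonneg_left this (by positivity)
      _ = I := by field_simp
  · -- right inequality
    have hrp : IntervalIntegrable (fun t : ℝ => t ^ s) volume 0 1 :=
      intervalIntegral.intervalIntegrable_rpow (Or.inl hs0.le)
    have hrp2 : IntervalIntegrable (fun t : ℝ => (1 - t) ^ s) volume 0 1 := by
      have := (hrp.comp_sub_left 1).symm
      simpa using this
    have hcmp : ∀ t ∈ Set.Icc (0:ℝ) 1,
        f ((b - a) * t + a) ≤ t ^ s * f b + (1 - t) ^ s * f a := by
      intro t ht
      have := hconv b (Set.mem_Ici.mpr hb0) a (Set.mem_Ici.mpr ha) t ht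
      rw [show t * b + (1 - t) * a = (b - a) * t + a by ring] at this
      exact this
    have hmono := intervalIntegral.integral_mono_on (by norm_num : (0:ℝ) ≤ 1) hg1
      ((hrp.mul_const _).add (hrp2.mul_const _)) hcmp
    rw [hint1, intervalIntegral.integral_add (hrp.mul_const _) (hrp2.mul_const _),
      intervalIntegral.integral_mul_const, intervalIntegral.integral_mul_const] at hmono
    have hv1 : ∫ t in (0:ℝ)..1, t ^ s = 1 / (s + 1) := by
      rw [integral_rpow (Or.inl (by linarith))]
      rw [Real.zero_rpow (by linarith : s + 1 ≠ 0)]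
      norm_num
    have hv2 : ∫ t in (0:ℝ)..1, (1 - t) ^ s = 1 / (s + 1) := by
      rw [intervalIntegral.integral_comp_sub_left (fun t => t ^ s) 1]
      norm_num [hv1]
    rw [hv1, hv2] at hmono
    rw [one_div]
    calc (b - a)⁻¹ * ∫ x in a..b, f x ≤ 1 / (s + 1) * f b + 1 / (s + 1) * f a := hmono
      _ = (f a + f b) / (s + 1) := by ring
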